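/- Let a2 be real with a2 ≠ 0, and define g(x,y) = 1 - 2*(1+2*a2^2)*x - 2*a2*y + (1+4*a2^2)*(x+a2*y)^2 and f(x,y) = -(1+a2^2) + 3*(x + a2*y + 2*a2^2*x)*[1 + a2^2 - (1+3*a2^2)*(x + a2*y)] + (1+3*a2^2)*(1+4*a2^2)*(x + a2*y)^3. On the open region U = {(x,y) in R^2 : g(x,y) > 0}, the function F(x,y) = (1/(12*a2^6)) * g(x,y)^(-3/2) * f(x,y) is a first integral of the codimension-4 system Q4 given by dx/dt = y - (1+6*a2^2)*x*y + a2*y^2, dy/dt = -x + x^2 + 5*a2*x*y - 2*(1+a2^2)*y^2; that is, (y - (1+6*a2^2)*x*y + a2*y^2)*∂F/∂x(x,y) + (-x + x^2 + 5*a2*x*y - 2*(1+a2^2)*y^2)*∂F/∂y(x,y) = 0 for all (x,y) in U. -/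

import Mathlib

/-- On U = {g > 0}, F = (1/(12 a2^6)) * g^(-3/2) * f is a first integral of
the codimension-4 system Q4. -/
theorem stmt_6 (a2 : ℝ) (ha2 : a2 ≠ 0)
    (g f : ℝ → ℝ → ℝ)
    (hg : ∀ x y : ℝ, g x y =
      1 - 2*(1 + 2*a2^2)*x - 2*a2*y + (1 + 4*a2^2)*(x + a2*y)^2)
    (hf : ∀ x y : ℝ, f x y =
      -(1 + a2^2)
      + 3*(x + a2*y + 2*a2^2*x) * (1 + a2^2 - (1 + 3*a2^2)*(x + a2*y))
      + (1 + 3*a2^2)*(1 + 4*a2^2)*(x + a2*y)^3)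
    (F : ℝ → ℝ → ℝ)
    (hF : ∀ x y : ℝ, F x y = (1/(12*a2^6)) * (g x y) ^ (-(3:ℝ)/2) * f x y) :
    ∀ x y : ℝ, g x y > 0 →
      (y - (1 + 6*a2^2)*x*y + a2*y^2) * deriv (fun x' => F x' y) x
        + (-x + x^2 + 5*a2*x*y - 2*(1 + a2^2)*y^2) *
            deriv (fun y' => F x y') y = 0 := by
  intro x y hgpos
  have hGne : g x y ≠ 0 := ne_of_gt hgpos
  have hGx : HasDerivAt (fun x' : ℝ => g x' y)
      (-(2*(1 + 2*a2^2)) + (1 + 4*a2^2)*(2*(x + a2*y))) x := by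
    have hb : HasDerivAt (fun x' : ℝ => x' + a2*y) 1 x := by
      simpa using (hasDerivAt_id x).add_const (a2*y)
    have h2 : HasDerivAt (fun x' : ℝ => (x' + a2*y)^2) (2*(x + a2*y)) x := by
      simpa using hb.fun_pow 2
    have h := (((hasDerivAt_const x (1:ℝ)).fun_sub
        ((hasDerivAt_id x).const_mul (2*(1 + 2*a2^2)))).sub_const
        (2*a2*y)).fun_add (h2.const_mul (1 + 4*a2^2))
    simp only [id_eq] at h
    refine HasDerivAt.congr_deriv (h.congr_of_eventuallyEq ?_) (by ring)
    filter_upwards with x' using by rw [hg]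
  have hGy : HasDerivAt (fun y' : ℝ => g x y')
      (-(2*a2) + (1 + 4*a2^2)*(2*(x + a2*y)*a2)) y := by
    have hb : HasDerivAt (fun y' : ℝ => x + a2*y') a2 y := by
      simpa using ((hasDerivAt_id y).const_mul a2).const_add x
    have h2 : HasDerivAt (fun y' : ℝ => (x + a2*y')^2) (2*(x + a2*y)*a2) y := by
      have := hb.fun_pow 2
      simpa using this.congr_deriv (by ring)
    have h := (((hasDerivAt_const y (1 - 2*(1 + 2*a2^2)*x : ℝ)).fun_sub
        ((hasDerivAt_id y).const_mul (2*a2))).fun_add (h2.const_mul (1 + 4*a2^2)))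
    simp only [id_eq] at h
    refine HasDerivAt.congr_deriv (h.congr_of_eventuallyEq ?_) (by ring)
    filter_upwards with y' using by rw [hg]
  have hFx : HasDerivAt (fun x' : ℝ => f x' y)
      (3*(1 + 2*a2^2)*(1 + a2^2 - (1 + 3*a2^2)*(x + a2*y))
        + 3*((x + a2*y) + 2*a2^2*x)*(-(1 + 3*a2^2))
        + 3*(1 + 3*a2^2)*(1 + 4*a2^2)*(x + a2*y)^2) x := by
    have hb : HasDerivAt (fun x' : ℝ => x' + a2*y) 1 x := by
      simpa using (hasDerivAt_id x).add_const (a2*y)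
    have h3 : HasDerivAt (fun x' : ℝ => (x' + a2*y)^3) (3*(x + a2*y)^2) x := by
      simpa using hb.fun_pow 3
    have hu : HasDerivAt (fun x' : ℝ => x' + a2*y + 2*a2^2*x') (1 + 2*a2^2) x := by
      have := hb.fun_add ((hasDerivAt_id x).const_mul (2*a2^2))
      simp only [id_eq] at this
      exact this.congr_deriv (by ring)
    have hv : HasDerivAt (fun x' : ℝ => 1 + a2^2 - (1 + 3*a2^2)*(x' + a2*y))
        (-(1 + 3*a2^2)) x := by
      have := (hb.const_mul (1 + 3*a2^2)).const_sub (1 + a2^2)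
      exact this.congr_deriv (by ring)
    have h := ((hasDerivAt_const x (-(1 + a2^2) : ℝ)).fun_add
        ((hu.const_mul 3).fun_mul hv)).fun_add (h3.const_mul ((1 + 3*a2^2)*(1 + 4*a2^2)))
    try simp only [id_eq] at h
    refine HasDerivAt.congr_deriv (h.congr_of_eventuallyEq ?_) (by ring)
    filter_upwards with x' using by rw [hf]
  have hFy : HasDerivAt (fun y' : ℝ => f x y')
      (3*a2*(1 + a2^2 - (1 + 3*a2^2)*(x + a2*y))
        + 3*((x + a2*y) + 2*a2^2*x)*(-(1 + 3*a2^2)*a2)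
        + 3*a2*(1 + 3*a2^2)*(1 + 4*a2^2)*(x + a2*y)^2) y := by
    have hb : HasDerivAt (fun y' : ℝ => x + a2*y') a2 y := by
      simpa using ((hasDerivAt_id y).const_mul a2).const_add x
    have h3 : HasDerivAt (fun y' : ℝ => (x + a2*y')^3) (3*(x + a2*y)^2*a2) y := by
      have := hb.fun_pow 3
      simpa using this.congr_deriv (by ring)
    have hu : HasDerivAt (fun y' : ℝ => x + a2*y' + 2*a2^2*x) a2 y := by
      simpa using hb.add_const (2*a2^2*x)
    have hv : HasDerivAt (fun y' : ℝ => 1 + a2^2 - (1 + 3*a2^2)*(x + a2*y'))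
        (-(1 + 3*a2^2)*a2) y := by
      have := (hb.const_mul (1 + 3*a2^2)).const_sub (1 + a2^2)
      exact this.congr_deriv (by ring)
    have h := ((hasDerivAt_const y (-(1 + a2^2) : ℝ)).fun_add
        ((hu.const_mul 3).fun_mul hv)).fun_add (h3.const_mul ((1 + 3*a2^2)*(1 + 4*a2^2)))
    try simp only [id_eq] at h
    refine HasDerivAt.congr_deriv (h.congr_of_eventuallyEq ?_) (by ring)
    filter_upwards with y' using by rw [hf]
  have hRx := hGx.rpow_const (p := -(3:ℝ)/2) (Or.inl hGne)
  have hRy := hGy.rpow_const (p := -(3:ℝ)/2) (Or.inl hGne)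
  have hDx : HasDerivAt (fun x' : ℝ => F x' y)
      (1/(12*a2^6) *
          ((-(2*(1 + 2*a2^2)) + (1 + 4*a2^2)*(2*(x + a2*y))) * (-(3:ℝ)/2) *
            g x y ^ (-(3:ℝ)/2 - 1)) *
        f x y +
      1/(12*a2^6) * g x y ^ (-(3:ℝ)/2) *
        (3*(1 + 2*a2^2)*(1 + a2^2 - (1 + 3*a2^2)*(x + a2*y))
          + 3*((x + a2*y) + 2*a2^2*x)*(-(1 + 3*a2^2))
          + 3*(1 + 3*a2^2)*(1 + 4*a2^2)*(x + a2*y)^2)) x := by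
    refine ((hRx.const_mul (1/(12*a2^6))).fun_mul hFx).congr_of_eventuallyEq ?_
    filter_upwards with x' using hF x' y
  have hDy : HasDerivAt (fun y' : ℝ => F x y')
      (1/(12*a2^6) *
          ((-(2*a2) + (1 + 4*a2^2)*(2*(x + a2*y)*a2)) * (-(3:ℝ)/2) *
            g x y ^ (-(3:ℝ)/2 - 1)) *
        f x y +
      1/(12*a2^6) * g x y ^ (-(3:ℝ)/2) *
        (3*a2*(1 + a2^2 - (1 + 3*a2^2)*(x + a2*y))
          + 3*((x + a2*y) + 2*a2^2*x)*(-(1 + 3*a2^2)*a2)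
          + 3*a2*(1 + 3*a2^2)*(1 + 4*a2^2)*(x + a2*y)^2)) y := by
    refine ((hRy.const_mul (1/(12*a2^6))).fun_mul hFy).congr_of_eventuallyEq ?_
    filter_upwards with y' using hF x y'
  rw [hDx.deriv, hDy.deriv]
  have hsplit : (g x y) ^ (-(3:ℝ)/2) = (g x y) ^ (-(3:ℝ)/2 - 1) * g x y := by
    rw [← Real.rpow_add_one hGne (-(3:ℝ)/2 - 1)]
    norm_num
  rw [hsplit]
  set t : ℝ := (g x y) ^ (-(3:ℝ)/2 - 1) with ht
  rw [hg, hf]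
  have h6 : (12:ℝ)*a2^6 ≠ 0 := by positivity
  field_simp
  ring
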